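/- Let L ≥ 1, let G = (ℤ/Lℤ)³, e_p(λ) = exp(2πi (p·λ)/L), and let D : G → M₃(ℝ) take values in symmetric 3×3 real matrices with D(−λ) = D(λ) and D(0) = 0. Set Â(p) = ∑_{λ≠0} D(λ) e_p(λ). Assume that for every p ∈ G with p ≠ 0 the Hermitian matrix Â(0) − Â(p) is positive definite. Then the quadratic form Q(y) = ½ ∑_{λ,μ∈G, λ≠μ} ⟨y(λ)−y(μ), D(λ−μ)(y(λ)−y(μ))⟩ satisfies Q(y) ≥ 0 for all y : G → ℝ³, and Q(y) = 0 if and only if y is constant. -/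

import Mathlib

open scoped BigOperators
open Matrix
open scoped ComplexOrder

/-- The character `e_p(λ) = exp(2πi (p·λ)/L)` on `(ℤ/Lℤ)³`, with `p·λ` computed from
the canonical representatives. -/
noncomputable def charZmod (L : ℕ) (p l : Fin 3 → ZMod L) : ℂ :=
  Complex.exp (2 * Real.pi * Complex.I * ((∑ i, (p i).val * (l i).val : ℕ) : ℂ) / L)

/-- The Fourier symbol `Â(p) = ∑_{λ≠0} D(λ) e_p(λ) ∈ M₃(ℂ)`. -/
noncomputable def AFourier (L : ℕ) [NeZero L]
    (D : (Fin 3 → ZMod L) → Matrix (Fin 3) (Fin 3) ℝ) (p : Fin 3 → ZMod L) :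
    Matrix (Fin 3) (Fin 3) ℂ :=
  ∑ l ∈ Finset.univ.erase (0 : Fin 3 → ZMod L), charZmod L p l • (D l).map ((↑) : ℝ → ℂ)

/-- The harmonic deviation energy quadratic form
`Q(y) = ½ ∑_{λ≠μ} ⟨y λ − y μ, D(λ−μ)(y λ − y μ)⟩`. -/
noncomputable def Qform (L : ℕ) [NeZero L]
    (D : (Fin 3 → ZMod L) → Matrix (Fin 3) (Fin 3) ℝ)
    (y : (Fin 3 → ZMod L) → Fin 3 → ℝ) : ℝ :=
  (1 / 2) * ∑ l : Fin 3 → ZMod L, ∑ m ∈ Finset.univ.erase l,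
    (y l - y m) ⬝ᵥ (D (l - m)).mulVec (y l - y m)

set_option linter.unusedSectionVars false
namespace DevAux

variable {L : ℕ} [NeZero L]

/-- inner product on `(ZMod L)³`. -/
def ip (p l : Fin 3 → ZMod L) : ZMod L := ∑ i, p i * l i

lemma ip_comm (p l : Fin 3 → ZMod L) : ip p l = ip l p := by
  simp [ip, mul_comm]

lemma ip_add_left (p q a : Fin 3 → ZMod L) : ip (p + q) a = ip p a + ip q a := by
  simp [ip, add_mul, Finset.sum_add_distrib]

lemma ip_zero_left (a : Fin 3 → ZMod L) : ip (0 : Fin 3 → ZMod L) a = 0 := by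
  simp [ip]

lemma ip_zero_right (a : Fin 3 → ZMod L) : ip a 0 = 0 := by
  simp [ip]

noncomputable def χ : ZMod L → ℂ := fun t => ZMod.stdAddChar t

lemma χ_add (a b : ZMod L) : χ (a + b) = χ a * χ b := by
  simp [χ, AddChar.map_add_eq_mul]

lemma χ_zero : χ (0 : ZMod L) = 1 := by simp [χ]

lemma χ_eq_one_iff {t : ZMod L} : χ t = 1 ↔ t = 0 := by
  constructor
  · intro h
    have : ZMod.stdAddChar t = ZMod.stdAddChar (0 : ZMod L) := by
      simpa [χ, AddChar.map_zero_eq_one] using h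
    exact ZMod.injective_stdAddChar this
  · intro h; simp [h, χ]

lemma χ_conj (t : ZMod L) : (starRingEnd ℂ) (χ t) = χ (-t) := by
  have h1 : χ (-t) = ((ZMod.toCircle (-t) : Circle) : ℂ) := rfl
  have h2 : χ t = ((ZMod.toCircle t : Circle) : ℂ) := rfl
  rw [h1, h2]
  rw [show ZMod.toCircle (-t) = (ZMod.toCircle t)⁻¹ from AddChar.map_neg_eq_inv _ t]
  exact (Circle.coe_inv_eq_conj _).symm

lemma char_eq (p l : Fin 3 → ZMod L) :
    charZmod L p l = χ (ip p l) := by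
  have hcast : ((((∑ i, (p i).val * (l i).val : ℕ) : ℤ)) : ZMod L) = ip p l := by
    push_cast
    simp [ip, ZMod.natCast_zmod_val]
  have := ZMod.stdAddChar_coe (N := L) ((∑ i, (p i).val * (l i).val : ℕ) : ℤ)
  rw [hcast] at this
  rw [charZmod, χ, this]
  norm_num


lemma sum_χ_eq_zero {a : Fin 3 → ZMod L} (ha : a ≠ 0) :
    ∑ p : Fin 3 → ZMod L, χ (ip p a) = 0 := by
  obtain ⟨i0, hi0⟩ : ∃ i, a i ≠ 0 := by
    by_contra h; push_neg at h; exact ha (funext h)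
  set q : Fin 3 → ZMod L := fun i => if i = i0 then 1 else 0 with hq
  have hipq : ip q a = a i0 := by
    simp [ip, hq, Finset.sum_ite_eq]
  have hne : χ (ip q a) ≠ 1 := by
    rw [hipq]; intro h; exact hi0 (χ_eq_one_iff.mp h)
  have hbij : ∑ p : Fin 3 → ZMod L, χ (ip (p + q) a)
      = ∑ p : Fin 3 → ZMod L, χ (ip p a) :=
    Fintype.sum_bijective (· + q) (Equiv.addRight q).bijective _ _ (fun p => rfl)
  have hmul : ∑ p : Fin 3 → ZMod L, χ (ip (p + q) a)
      = (∑ p : Fin 3 → ZMod L, χ (ip p a)) * χ (ip q a) := by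
    rw [Finset.sum_mul]
    refine Finset.sum_congr rfl (fun p _ => ?_)
    rw [ip_add_left, χ_add]
  have key : (∑ p : Fin 3 → ZMod L, χ (ip p a)) * χ (ip q a)
      = (∑ p : Fin 3 → ZMod L, χ (ip p a)) * 1 := by
    rw [mul_one, ← hmul, hbij]
  rcases mul_eq_mul_left_iff.mp key with h | h
  · exact absurd h hne
  · exact h

lemma sum_χ (a : Fin 3 → ZMod L) :
    ∑ p : Fin 3 → ZMod L, χ (ip p a) = if a = 0 then ((L : ℂ)^3) else 0 := by
  split_ifs with h
  · subst h
    simp only [ip_zero_right, χ_zero, Finset.sum_const, Finset.card_univ, nsmul_eq_mul, mul_one]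
    simp [Fintype.card_fun, ZMod.card]
  · exact sum_χ_eq_zero h


section main

variable (D : (Fin 3 → ZMod L) → Matrix (Fin 3) (Fin 3) ℝ)
variable (y : (Fin 3 → ZMod L) → Fin 3 → ℝ)

/-- complexified configuration -/
def yc : (Fin 3 → ZMod L) → Fin 3 → ℂ := fun l i => ((y l i : ℝ) : ℂ)

/-- complexified matrices -/
def Dc : (Fin 3 → ZMod L) → Matrix (Fin 3) (Fin 3) ℂ := fun ν => (D ν).map ((↑) : ℝ → ℂ)

/-- discrete Fourier transform of the configuration -/
noncomputable def Yhat (p : Fin 3 → ZMod L) : Fin 3 → ℂ :=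
  ∑ l : Fin 3 → ZMod L, χ (ip p l) • yc y l

/-- the full sum of the matrices -/
def Sfull : Matrix (Fin 3) (Fin 3) ℝ := ∑ ν : Fin 3 → ZMod L, D ν

-- generic sum/dot lemmas
lemma sum_dotProduct' {α : Type*} (s : Finset α) (f : α → Fin 3 → ℂ) (v : Fin 3 → ℂ) :
    (∑ a ∈ s, f a) ⬝ᵥ v = ∑ a ∈ s, f a ⬝ᵥ v := by
  simp only [dotProduct, Finset.sum_apply, Finset.sum_mul]
  rw [Finset.sum_comm]

lemma dotProduct_sum' {α : Type*} (s : Finset α) (v : Fin 3 → ℂ) (f : α → Fin 3 → ℂ) :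
    v ⬝ᵥ (∑ a ∈ s, f a) = ∑ a ∈ s, v ⬝ᵥ f a := by
  simp only [dotProduct, Finset.sum_apply, Finset.mul_sum]
  rw [Finset.sum_comm]

lemma mulVec_sum' {α : Type*} (s : Finset α) (M : Matrix (Fin 3) (Fin 3) ℂ)
    (f : α → Fin 3 → ℂ) : M *ᵥ (∑ a ∈ s, f a) = ∑ a ∈ s, M *ᵥ f a := by
  funext i
  simp only [Matrix.mulVec, Finset.sum_apply]
  exact dotProduct_sum' s _ f

lemma sum_mulVec' {α : Type*} (s : Finset α) (f : α → Matrix (Fin 3) (Fin 3) ℂ)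
    (v : Fin 3 → ℂ) : (∑ a ∈ s, f a) *ᵥ v = ∑ a ∈ s, f a *ᵥ v := by
  funext i
  simp only [Matrix.mulVec, Finset.sum_apply]
  rw [show (fun j => (∑ a ∈ s, f a) i j) = ∑ a ∈ s, (fun j => f a i j) by
    funext j; simp [Matrix.sum_apply, Finset.sum_apply]]
  exact sum_dotProduct' s _ v

lemma dot_symm (M : Matrix (Fin 3) (Fin 3) ℝ) (hM : M.IsSymm) (v w : Fin 3 → ℝ) :
    v ⬝ᵥ M *ᵥ w = w ⬝ᵥ M *ᵥ v := by
  calc v ⬝ᵥ M *ᵥ w = (v ᵥ* M) ⬝ᵥ w := Matrix.dotProduct_mulVec _ _ _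
    _ = (Mᵀ *ᵥ v) ⬝ᵥ w := by rw [Matrix.mulVec_transpose]
    _ = (M *ᵥ v) ⬝ᵥ w := by rw [hM]
    _ = w ⬝ᵥ M *ᵥ v := dotProduct_comm _ _

-- reindexing
lemma sum_D_sub_right (m : Fin 3 → ZMod L) :
    ∑ l : Fin 3 → ZMod L, D (l - m) = Sfull D :=
  Fintype.sum_bijective (fun l => l - m) (Equiv.subRight m).bijective
    (fun l => D (l - m)) D (fun _ => rfl)

lemma sum_D_sub_left (l : Fin 3 → ZMod L) :
    ∑ m : Fin 3 → ZMod L, D (l - m) = Sfull D :=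
  Fintype.sum_bijective (fun m => l - m) (Equiv.subLeft l).bijective
    (fun m => D (l - m)) D (fun _ => rfl)

/-- Claim 1: the quadratic form as a convolution form. -/
lemma Qform_eq (hsymm : ∀ l, (D l).IsSymm) (hzero : D 0 = 0) :
    Qform L D y = (∑ l : Fin 3 → ZMod L, y l ⬝ᵥ (Sfull D) *ᵥ y l)
      - ∑ l : Fin 3 → ZMod L, ∑ m : Fin 3 → ZMod L, y l ⬝ᵥ (D (l - m)) *ᵥ y m := by
  have hfull : ∀ l : Fin 3 → ZMod L,
      (∑ m ∈ Finset.univ.erase l, (y l - y m) ⬝ᵥ (D (l - m)) *ᵥ (y l - y m))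
      = ∑ m : Fin 3 → ZMod L, (y l - y m) ⬝ᵥ (D (l - m)) *ᵥ (y l - y m) := by
    intro l
    rw [← Finset.sum_erase_add Finset.univ _ (Finset.mem_univ l)]
    simp
  unfold Qform
  simp only [hfull]
  have expand : ∀ l m : Fin 3 → ZMod L,
      (y l - y m) ⬝ᵥ (D (l - m)) *ᵥ (y l - y m)
      = y l ⬝ᵥ (D (l - m)) *ᵥ y l - y l ⬝ᵥ (D (l - m)) *ᵥ y m
        - y l ⬝ᵥ (D (l - m)) *ᵥ y m + y m ⬝ᵥ (D (l - m)) *ᵥ y m := by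
    intro l m
    rw [Matrix.mulVec_sub, sub_dotProduct, dotProduct_sub,
      dotProduct_sub]
    rw [dot_symm _ (hsymm _) (y m) (y l)]
    ring
  simp only [expand]
  have hsum : ∀ l : Fin 3 → ZMod L,
      ∑ m : Fin 3 → ZMod L, y l ⬝ᵥ (D (l - m)) *ᵥ y l = y l ⬝ᵥ (Sfull D) *ᵥ y l := by
    intro l
    rw [← sum_D_sub_left D l]
    rw [show (∑ m : Fin 3 → ZMod L, D (l - m)) *ᵥ y l
        = ∑ m : Fin 3 → ZMod L, (D (l - m)) *ᵥ y l by
      funext i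
      simp [Matrix.mulVec, dotProduct, Matrix.sum_apply, Finset.sum_apply, Finset.sum_mul]
      rw [Finset.sum_comm]]
    rw [show y l ⬝ᵥ (∑ m : Fin 3 → ZMod L, (D (l - m)) *ᵥ y l)
        = ∑ m : Fin 3 → ZMod L, y l ⬝ᵥ (D (l - m)) *ᵥ y l by
      simp [dotProduct, Finset.sum_apply, Finset.mul_sum]
      rw [Finset.sum_comm]]
  have hsum2 : ∑ l : Fin 3 → ZMod L, ∑ m : Fin 3 → ZMod L,
      y m ⬝ᵥ (D (l - m)) *ᵥ y m = ∑ l : Fin 3 → ZMod L, y l ⬝ᵥ (Sfull D) *ᵥ y l := by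
    rw [Finset.sum_comm]
    refine Finset.sum_congr rfl (fun m _ => ?_)
    rw [← sum_D_sub_right D m]
    rw [show (∑ l : Fin 3 → ZMod L, D (l - m)) *ᵥ y m
        = ∑ l : Fin 3 → ZMod L, (D (l - m)) *ᵥ y m by
      funext i
      simp [Matrix.mulVec, dotProduct, Matrix.sum_apply, Finset.sum_apply, Finset.sum_mul]
      rw [Finset.sum_comm]]
    simp [dotProduct, Finset.sum_apply, Finset.mul_sum]
    rw [Finset.sum_comm]
  simp only [Finset.sum_add_distrib, Finset.sum_sub_distrib, hsum, hsum2]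
  ring


lemma ip_neg_right (p a : Fin 3 → ZMod L) : ip p (-a) = - ip p a := by
  simp [ip, mul_neg]

lemma ip_add_right (p a b : Fin 3 → ZMod L) : ip p (a + b) = ip p a + ip p b := by
  simp [ip, mul_add, Finset.sum_add_distrib]

lemma AFourier_eq (p : Fin 3 → ZMod L) :
    AFourier L D p = ∑ ν ∈ Finset.univ.erase 0, χ (ip p ν) • Dc D ν := by
  unfold AFourier
  exact Finset.sum_congr rfl (fun ν _ => by rw [char_eq]; rfl)

lemma Dc_zero (hzero : D 0 = 0) : Dc D 0 = 0 := by
  ext i j; simp [Dc, hzero]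

lemma map_Sfull : (Sfull D).map ((↑) : ℝ → ℂ) = ∑ ν : Fin 3 → ZMod L, Dc D ν := by
  ext i j
  simp [Sfull, Dc, Matrix.map_apply, Matrix.sum_apply]

lemma AFourier_zero (hzero : D 0 = 0) :
    AFourier L D 0 = (Sfull D).map ((↑) : ℝ → ℂ) := by
  rw [AFourier_eq, map_Sfull]
  rw [Finset.sum_congr rfl (fun ν (_ : ν ∈ Finset.univ.erase 0) => by
    rw [ip_zero_left, χ_zero, one_smul])]
  rw [← Finset.sum_erase_add Finset.univ _ (Finset.mem_univ (0 : Fin 3 → ZMod L)),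
    Dc_zero D hzero, add_zero]

lemma star_Yhat (p : Fin 3 → ZMod L) :
    star (Yhat y p) = ∑ l : Fin 3 → ZMod L, χ (ip p (-l)) • yc y l := by
  funext i
  simp only [Yhat, Pi.star_apply, Finset.sum_apply, Pi.smul_apply, smul_eq_mul]
  rw [show (star (∑ l : Fin 3 → ZMod L, χ (ip p l) * yc y l i) : ℂ)
      = ∑ l : Fin 3 → ZMod L, (starRingEnd ℂ) (χ (ip p l) * yc y l i) from
    map_sum (starRingEnd ℂ) _ _]
  refine Finset.sum_congr rfl (fun l _ => ?_)
  rw [_root_.map_mul, χ_conj, ← ip_neg_right]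
  simp [yc, Complex.conj_ofReal]

lemma dot_expand (M : Matrix (Fin 3) (Fin 3) ℂ) (p : Fin 3 → ZMod L) :
    star (Yhat y p) ⬝ᵥ M *ᵥ Yhat y p
      = ∑ l : Fin 3 → ZMod L, ∑ m : Fin 3 → ZMod L,
          χ (ip p (m - l)) * (yc y l ⬝ᵥ M *ᵥ yc y m) := by
  rw [star_Yhat]
  rw [show Yhat y p = ∑ m : Fin 3 → ZMod L, χ (ip p m) • yc y m from rfl]
  rw [mulVec_sum', sum_dotProduct']
  refine Finset.sum_congr rfl (fun l _ => ?_)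
  rw [dotProduct_sum']
  refine Finset.sum_congr rfl (fun m _ => ?_)
  rw [Matrix.mulVec_smul, smul_dotProduct, dotProduct_smul]
  rw [show m - l = m + (-l) from sub_eq_add_neg m l, ip_add_right, χ_add]
  simp only [smul_eq_mul]
  ring

lemma inner_AFourier (p l m : Fin 3 → ZMod L) :
    yc y l ⬝ᵥ (AFourier L D p) *ᵥ yc y m
      = ∑ ν ∈ Finset.univ.erase 0, χ (ip p ν) * (yc y l ⬝ᵥ Dc D ν *ᵥ yc y m) := by
  rw [AFourier_eq, sum_mulVec', dotProduct_sum']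
  refine Finset.sum_congr rfl (fun ν _ => ?_)
  rw [Matrix.smul_mulVec, dotProduct_smul, smul_eq_mul]

lemma piece1 :
    ∑ p : Fin 3 → ZMod L, ∑ l : Fin 3 → ZMod L, ∑ m : Fin 3 → ZMod L,
        χ (ip p (m - l)) * (yc y l ⬝ᵥ ((Sfull D).map ((↑) : ℝ → ℂ)) *ᵥ yc y m)
      = (L : ℂ)^3 * ∑ l : Fin 3 → ZMod L,
          yc y l ⬝ᵥ ((Sfull D).map ((↑) : ℝ → ℂ)) *ᵥ yc y l := by
  rw [Finset.sum_comm, Finset.mul_sum]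
  refine Finset.sum_congr rfl (fun l _ => ?_)
  rw [Finset.sum_comm]
  have : ∀ m : Fin 3 → ZMod L,
      ∑ p : Fin 3 → ZMod L, χ (ip p (m - l)) * (yc y l ⬝ᵥ ((Sfull D).map ((↑) : ℝ → ℂ)) *ᵥ yc y m)
      = if m = l then (L : ℂ)^3 * (yc y l ⬝ᵥ ((Sfull D).map ((↑) : ℝ → ℂ)) *ᵥ yc y m) else 0 := by
    intro m
    rw [← Finset.sum_mul, sum_χ]
    by_cases h : m = l
    · rw [if_pos h, if_pos (by rw [h, sub_self])]
    · rw [if_neg (fun hh => h (sub_eq_zero.mp hh)), if_neg h, zero_mul]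
  rw [Finset.sum_congr rfl (fun m _ => this m)]
  rw [Finset.sum_ite_eq' Finset.univ l
    (fun m => (L : ℂ)^3 * (yc y l ⬝ᵥ ((Sfull D).map ((↑) : ℝ → ℂ)) *ᵥ yc y m))]
  simp

lemma piece2 (hzero : D 0 = 0) :
    ∑ p : Fin 3 → ZMod L, ∑ l : Fin 3 → ZMod L, ∑ m : Fin 3 → ZMod L,
        ∑ ν ∈ Finset.univ.erase 0,
          χ (ip p (m - l + ν)) * (yc y l ⬝ᵥ Dc D ν *ᵥ yc y m)
      = (L : ℂ)^3 * ∑ l : Fin 3 → ZMod L, ∑ m : Fin 3 → ZMod L,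
          yc y l ⬝ᵥ Dc D (l - m) *ᵥ yc y m := by
  rw [Finset.sum_comm, Finset.mul_sum]
  refine Finset.sum_congr rfl (fun l _ => ?_)
  rw [Finset.sum_comm, Finset.mul_sum]
  refine Finset.sum_congr rfl (fun m _ => ?_)
  rw [Finset.sum_comm]
  have step : ∀ ν ∈ Finset.univ.erase (0 : Fin 3 → ZMod L),
      ∑ p : Fin 3 → ZMod L, χ (ip p (m - l + ν)) * (yc y l ⬝ᵥ Dc D ν *ᵥ yc y m)
      = if ν = l - m then (L : ℂ)^3 * (yc y l ⬝ᵥ Dc D ν *ᵥ yc y m) else 0 := by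
    intro ν _
    rw [← Finset.sum_mul, sum_χ]
    by_cases h : ν = l - m
    · rw [if_pos (by rw [h]; abel), if_pos h]
    · rw [if_neg (fun hh => h (by
        rw [add_comm] at hh
        rw [add_eq_zero_iff_eq_neg] at hh
        rw [hh, neg_sub])), if_neg h, zero_mul]
  rw [Finset.sum_congr rfl step]
  rw [Finset.sum_ite_eq' (Finset.univ.erase 0) (l - m)
    (fun ν => (L : ℂ)^3 * (yc y l ⬝ᵥ Dc D ν *ᵥ yc y m))]
  by_cases hlm : l - m = 0
  · rw [if_neg (by simp [hlm])]
    rw [hlm, Dc_zero D hzero]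
    simp
  · rw [if_pos (by simp [hlm])]

lemma sum_T (hzero : D 0 = 0) :
    ∑ p : Fin 3 → ZMod L, star (Yhat y p) ⬝ᵥ (AFourier L D 0 - AFourier L D p) *ᵥ Yhat y p
    = (L : ℂ)^3 * ((∑ l : Fin 3 → ZMod L,
          yc y l ⬝ᵥ ((Sfull D).map ((↑) : ℝ → ℂ)) *ᵥ yc y l)
        - ∑ l : Fin 3 → ZMod L, ∑ m : Fin 3 → ZMod L,
            yc y l ⬝ᵥ Dc D (l - m) *ᵥ yc y m) := by
  have hTp : ∀ p : Fin 3 → ZMod L,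
      star (Yhat y p) ⬝ᵥ (AFourier L D 0 - AFourier L D p) *ᵥ Yhat y p
      = (∑ l : Fin 3 → ZMod L, ∑ m : Fin 3 → ZMod L,
            χ (ip p (m - l)) * (yc y l ⬝ᵥ ((Sfull D).map ((↑) : ℝ → ℂ)) *ᵥ yc y m))
        - ∑ l : Fin 3 → ZMod L, ∑ m : Fin 3 → ZMod L,
            ∑ ν ∈ Finset.univ.erase 0,
              χ (ip p (m - l + ν)) * (yc y l ⬝ᵥ Dc D ν *ᵥ yc y m) := by
    intro p
    rw [AFourier_zero D hzero, Matrix.sub_mulVec, dotProduct_sub,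
      dot_expand, dot_expand]
    congr 1
    refine Finset.sum_congr rfl (fun l _ => Finset.sum_congr rfl (fun m _ => ?_))
    rw [inner_AFourier, Finset.mul_sum]
    refine Finset.sum_congr rfl (fun ν _ => ?_)
    rw [ip_add_right, χ_add]
    ring
  rw [Finset.sum_congr rfl (fun p _ => hTp p), Finset.sum_sub_distrib,
    piece1, piece2 D y hzero, mul_sub]


lemma cast_dot (M : Matrix (Fin 3) (Fin 3) ℝ) (v w : Fin 3 → ℝ) :
    ((v ⬝ᵥ M *ᵥ w : ℝ) : ℂ)
      = (fun i => ((v i : ℝ) : ℂ)) ⬝ᵥ (M.map ((↑) : ℝ → ℂ)) *ᵥ (fun i => ((w i : ℝ) : ℂ)) := by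
  simp only [dotProduct, Matrix.mulVec, Matrix.map_apply]
  push_cast
  rfl

lemma cast_Qform (hsymm : ∀ l, (D l).IsSymm) (hzero : D 0 = 0) :
    ((Qform L D y : ℝ) : ℂ)
      = (∑ l : Fin 3 → ZMod L, yc y l ⬝ᵥ ((Sfull D).map ((↑) : ℝ → ℂ)) *ᵥ yc y l)
        - ∑ l : Fin 3 → ZMod L, ∑ m : Fin 3 → ZMod L,
            yc y l ⬝ᵥ Dc D (l - m) *ᵥ yc y m := by
  rw [Qform_eq D y hsymm hzero]
  push_cast
  simp only [cast_dot]
  rfl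

lemma inversion (hY : ∀ p : Fin 3 → ZMod L, p ≠ 0 → Yhat y p = 0) (l : Fin 3 → ZMod L) :
    ((L : ℂ)^3) • yc y l = Yhat y 0 := by
  have h1 : ∑ p : Fin 3 → ZMod L, χ (ip p (-l)) • Yhat y p = ((L : ℂ)^3) • yc y l := by
    calc ∑ p : Fin 3 → ZMod L, χ (ip p (-l)) • Yhat y p
        = ∑ p : Fin 3 → ZMod L, ∑ m : Fin 3 → ZMod L,
            (χ (ip p (-l)) * χ (ip p m)) • yc y m := by
          refine Finset.sum_congr rfl fun p _ => ?_
          rw [Yhat, Finset.smul_sum]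
          exact Finset.sum_congr rfl fun m _ => (smul_smul _ _ _)
      _ = ∑ m : Fin 3 → ZMod L, (∑ p : Fin 3 → ZMod L, χ (ip p (m - l))) • yc y m := by
          rw [Finset.sum_comm]
          refine Finset.sum_congr rfl fun m _ => ?_
          rw [Finset.sum_smul]
          refine Finset.sum_congr rfl fun p _ => ?_
          rw [show m - l = m + (-l) from sub_eq_add_neg m l, ip_add_right, χ_add, mul_comm]
      _ = ((L : ℂ)^3) • yc y l := by
          rw [Finset.sum_congr rfl (fun m (_ : m ∈ Finset.univ) => by rw [sum_χ])]
          have hite : ∀ m : Fin 3 → ZMod L,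
              (if m - l = 0 then ((L : ℂ)^3) else 0) • yc y m
              = if m = l then ((L : ℂ)^3) • yc y m else 0 := by
            intro m
            by_cases h : m = l
            · rw [if_pos (by rw [h, sub_self]), if_pos h]
            · rw [if_neg (fun hh => h (sub_eq_zero.mp hh)), if_neg h, zero_smul]
          rw [Finset.sum_congr rfl fun m _ => hite m,
            Finset.sum_ite_eq' Finset.univ l (fun m => ((L : ℂ)^3) • yc y m)]
          simp
  have h2 : ∑ p : Fin 3 → ZMod L, χ (ip p (-l)) • Yhat y p = Yhat y 0 := by
    rw [Finset.sum_eq_single (0 : Fin 3 → ZMod L)]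
    · rw [ip_zero_left, χ_zero, one_smul]
    · intro p _ hp; rw [hY p hp, smul_zero]
    · intro h; exact absurd (Finset.mem_univ _) h
  rw [← h1, h2]

end main
end DevAux

theorem deviation_energy_nonneg_and_kernel_constants
    (L : ℕ) [NeZero L]
    (D : (Fin 3 → ZMod L) → Matrix (Fin 3) (Fin 3) ℝ)
    (hsymm : ∀ l, (D l).IsSymm)
    (heven : ∀ l, D (-l) = D l)
    (hzero : D 0 = 0)
    (hpos : ∀ p : Fin 3 → ZMod L, p ≠ 0 → (AFourier L D 0 - AFourier L D p).PosDef) :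
    (∀ y : (Fin 3 → ZMod L) → Fin 3 → ℝ, 0 ≤ Qform L D y) ∧
    (∀ y : (Fin 3 → ZMod L) → Fin 3 → ℝ,
      Qform L D y = 0 ↔ ∃ c : Fin 3 → ℝ, ∀ l, y l = c) := by
  classical
  have hLpos : (0 : ℝ) < (L : ℝ) := by
    exact_mod_cast Nat.pos_of_ne_zero (NeZero.ne L)
  have hL3 : (0 : ℝ) < (L : ℝ)^3 := by positivity
  have key : ∀ y : (Fin 3 → ZMod L) → Fin 3 → ℝ,
      ∑ p : Fin 3 → ZMod L,
        star (DevAux.Yhat y p) ⬝ᵥ (AFourier L D 0 - AFourier L D p) *ᵥ DevAux.Yhat y p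
      = ((((L : ℝ)^3 * Qform L D y : ℝ)) : ℂ) := by
    intro y
    rw [DevAux.sum_T D y hzero, ← DevAux.cast_Qform D y hsymm hzero]
    push_cast
    ring
  have hTnn : ∀ (y : (Fin 3 → ZMod L) → Fin 3 → ℝ) (p : Fin 3 → ZMod L),
      0 ≤ star (DevAux.Yhat y p) ⬝ᵥ (AFourier L D 0 - AFourier L D p) *ᵥ DevAux.Yhat y p := by
    intro y p
    by_cases hp : p = 0
    · subst hp
      simp [sub_self, Matrix.zero_mulVec, dotProduct_zero]
    · by_cases hY : DevAux.Yhat y p = 0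
      · rw [hY]
        simp [Matrix.mulVec_zero, dotProduct_zero]
      · exact le_of_lt ((hpos p hp).dotProduct_mulVec_pos hY)
  have main_nonneg : ∀ y : (Fin 3 → ZMod L) → Fin 3 → ℝ, 0 ≤ Qform L D y := by
    intro y
    have hsum : (0 : ℂ) ≤ ∑ p : Fin 3 → ZMod L,
        star (DevAux.Yhat y p) ⬝ᵥ (AFourier L D 0 - AFourier L D p) *ᵥ DevAux.Yhat y p :=
      Finset.sum_nonneg (fun p _ => hTnn y p)
    rw [key y] at hsum
    have hre : (0 : ℝ) ≤ (L : ℝ)^3 * Qform L D y := by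
      have h := (Complex.nonneg_iff.mp hsum).1
      rwa [Complex.ofReal_re] at h
    nlinarith
  refine ⟨main_nonneg, fun y => ⟨fun hQ => ?_, fun ⟨c, hc⟩ => ?_⟩⟩
  · have hsum0 : ∑ p : Fin 3 → ZMod L,
        star (DevAux.Yhat y p) ⬝ᵥ (AFourier L D 0 - AFourier L D p) *ᵥ DevAux.Yhat y p
        = 0 := by
      rw [key y, hQ]
      simp
    have hT0 : ∀ p : Fin 3 → ZMod L,
        star (DevAux.Yhat y p) ⬝ᵥ (AFourier L D 0 - AFourier L D p) *ᵥ DevAux.Yhat y p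
        = 0 := fun p =>
      (Finset.sum_eq_zero_iff_of_nonneg (fun p _ => hTnn y p)).mp hsum0 p (Finset.mem_univ p)
    have hY : ∀ p : Fin 3 → ZMod L, p ≠ 0 → DevAux.Yhat y p = 0 := by
      intro p hp
      by_contra hYne
      have h1 := (hpos p hp).dotProduct_mulVec_pos hYne
      rw [hT0 p] at h1
      exact lt_irrefl _ h1
    have hinv := DevAux.inversion y hY
    refine ⟨y 0, fun l => ?_⟩
    have h1 : ((L : ℂ)^3) • DevAux.yc y l = ((L : ℂ)^3) • DevAux.yc y 0 := by
      rw [hinv l, hinv 0]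
    have hL3c : ((L : ℂ)^3) ≠ 0 := by
      exact pow_ne_zero _ (Nat.cast_ne_zero.mpr (NeZero.ne L))
    have hc : DevAux.yc y l = DevAux.yc y 0 := smul_right_injective _ hL3c h1
    funext i
    exact Complex.ofReal_inj.mp (congrFun hc i)
  · simp [Qform, hc, sub_self]
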